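/- arXiv:math/9906038 — 2 statements merged into one kernel-verified Lean document; each statement's English description precedes it below -/
import Mathlib

section
/- Let 1 → N →ʲ E →ᵖ G → 1 be a group extension and let s, s' : G → E be two sections of p, with factor sets f and f' and induced quasi-actions L and L' respectively. Since s(x) * (s'(x))⁻¹ ∈ ker p = range j, there is a unique 1-cochain γ : G → N with j(γ(x)) = s(x) * (s'(x))⁻¹. Then the quasi-actions differ pointwise by inner automorphisms of N: L'(x)(n) = (γ(x))⁻¹ * L(x)(n) * γ(x) for all x ∈ G and n ∈ N; in particular, the induced outer action of G on N is independent of the choice of section. -/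
/-- For two sections `s, s'` of a group extension `1 → N →ʲ E →ᵖ G → 1`, with `γ : G → N`
the unique 1-cochain satisfying `j (γ x) = s x * (s' x)⁻¹`, the induced quasi-actions differ
pointwise by inner automorphisms of `N`: `L' x n = (γ x)⁻¹ * L x n * γ x`. In particular the
induced outer action of `G` on `N` is independent of the choice of section. -/
theorem quasi_actions_differ_by_inner {N E G : Type*} [Group N] [Group E] [Group G]
    (j : N →* E) (p : E →* G) (hj : Function.Injective j) (hp : Function.Surjective p)
    (hrange : j.range = p.ker)
    (s : G → E) (hs : ∀ x : G, p (s x) = x)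
    (s' : G → E) (hs' : ∀ x : G, p (s' x) = x)
    (L : G → MulAut N) (hL : ∀ (x : G) (n : N), j (L x n) = s x * j n * (s x)⁻¹)
    (L' : G → MulAut N) (hL' : ∀ (x : G) (n : N), j (L' x n) = s' x * j n * (s' x)⁻¹)
    (γ : G → N) (hγ : ∀ x : G, j (γ x) = s x * (s' x)⁻¹) :
    ∀ (x : G) (n : N), L' x n = (γ x)⁻¹ * L x n * γ x := by
  intro x n
  apply hj
  simp only [map_mul, map_inv, hL', hL, hγ]
  group
end

section
/- Let 1 → N →ʲ E →ᵖ G → 1 be a group extension and let s, s' : G → E be two sections of p with factor sets f and f' respectively, whose induced quasi-actions coincide: L(x) = L'(x) for all x ∈ G. Let γ : G → N be the unique 1-cochain with j(γ(x)) = s(x) * (s'(x))⁻¹. Then the factor sets are cohomologous in the classical sense relative to L: for all x, y ∈ G, f(x,y) * γ(x*y) = γ(x) * L(x)(γ(y)) * f'(x,y), where all values of γ are central in N. -/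
/-- If two sections `s, s'` of a group extension `1 → N →ʲ E →ᵖ G → 1`, with factor sets
`f, f'`, induce the same quasi-action (`L x = L' x` for all `x`), then the factor sets
are cohomologous in the classical sense relative to `L` via the 1-cochain `γ` determined
by `j (γ x) = s x * (s' x)⁻¹`: one has `f x y * γ (x*y) = γ x * L x (γ y) * f' x y`,
where all values of `γ` are central in `N`. -/
theorem factor_sets_cohomologous_of_same_action {N E G : Type*} [Group N] [Group E] [Group G]
    (j : N →* E) (p : E →* G) (hj : Function.Injective j) (hp : Function.Surjective p)
    (hrange : j.range = p.ker)
    (s : G → E) (hs : ∀ x : G, p (s x) = x)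
    (s' : G → E) (hs' : ∀ x : G, p (s' x) = x)
    (f : G → G → N) (hf : ∀ x y : G, j (f x y) = s x * s y * (s (x * y))⁻¹)
    (f' : G → G → N) (hf' : ∀ x y : G, j (f' x y) = s' x * s' y * (s' (x * y))⁻¹)
    (L : G → MulAut N) (hL : ∀ (x : G) (n : N), j (L x n) = s x * j n * (s x)⁻¹)
    (L' : G → MulAut N) (hL' : ∀ (x : G) (n : N), j (L' x n) = s' x * j n * (s' x)⁻¹)
    (hLL' : ∀ x : G, L x = L' x)
    (γ : G → N) (hγ : ∀ x : G, j (γ x) = s x * (s' x)⁻¹) :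
    (∀ x : G, γ x ∈ Subgroup.center N) ∧
      ∀ x y : G, f x y * γ (x * y) = γ x * L x (γ y) * f' x y := by

  have key : ∀ (x : G) (m : N), j (γ x) * j m = j m * j (γ x) := by
    intro x m
    have hk : j m = s' x * j ((L' x).symm m) * (s' x)⁻¹ := by
      rw [← hL']; simp
    set k := (L' x).symm m with hkdef
    have h1 : s x * j k * (s x)⁻¹ = s' x * j k * (s' x)⁻¹ := by
      rw [← hL, ← hL', hLL']
    rw [hγ, hk]
    calc s x * (s' x)⁻¹ * (s' x * j k * (s' x)⁻¹)
        = s x * j k * (s x)⁻¹ * (s x * (s' x)⁻¹) := by group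
      _ = s' x * j k * (s' x)⁻¹ * (s x * (s' x)⁻¹) := by rw [h1]
  constructor
  · intro x
    rw [Subgroup.mem_center_iff]
    intro m
    apply hj
    rw [map_mul, map_mul, ← key]
  · intro x y
    apply hj
    rw [map_mul, map_mul, map_mul, key x (L x (γ y)), hf, hγ, hγ, hf', hL, hγ]
    group
end
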